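/- If two permutations π and τ of the same size have their left-to-right maxima in exactly the same positions, then the trees T(π) and T(τ) of iterated bubblesort preimages are isomorphic as rooted trees. -/

import Mathlib

/-- One pass of bubblesort on a list of naturals. -/
def bpass : List ℕ → List ℕ
  | [] => []
  | [a] => [a]
  | a :: b :: l => if b < a then b :: bpass (a :: l) else a :: bpass (b :: l)

/-- The identity permutation 1 2 ... n as a list. -/
def idList (n : ℕ) : List ℕ := List.map (· + 1) (List.range n)

/-- `l` is (the word of) a permutation of size `n`, i.e. a rearrangement of 1,...,n. -/
def IsPermList (n : ℕ) (l : List ℕ) : Prop := l.Perm (idList n)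

/-- position `j` of `l` holds a left-to-right maximum. -/
def IsLTRMax (l : List ℕ) (j : ℕ) : Prop :=
  j < l.length ∧ ∀ i < j, l.getD i 0 < l.getD j 0

instance (l : List ℕ) (j : ℕ) : Decidable (IsLTRMax l j) := by
  unfold IsLTRMax; infer_instance

/-- the number of left-to-right maxima of `l`. -/
def ltrCount (l : List ℕ) : ℕ :=
  ((List.range l.length).filter fun j => decide (IsLTRMax l j)).length

/-- the length of the longest suffix of `l` consisting of left-to-right maxima. -/
def suffLen (l : List ℕ) : ℕ :=
  ((List.range l.length).takeWhile fun j => decide (IsLTRMax l (l.length - 1 - j))).length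

/-- `σ` is a node of the tree `T(π)` of iterated bubblesort preimages. -/
def IsNode (n : ℕ) (π σ : List ℕ) : Prop :=
  IsPermList n σ ∧ ∃ j, bpass^[j] σ = π

/-- `σ` is a node of `T(π)` at height `j` (j passes needed to reach π, and no fewer). -/
def IsNodeAt (n : ℕ) (π σ : List ℕ) (j : ℕ) : Prop :=
  IsPermList n σ ∧ bpass^[j] σ = π ∧ ∀ i < j, bpass^[i] σ ≠ π

/-- `τ` is a leaf: it has no child, i.e. no bubblesort preimage other than itself. -/
def IsLeafNode (n : ℕ) (τ : List ℕ) : Prop :=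
  ¬ ∃ ρ, IsPermList n ρ ∧ ρ ≠ τ ∧ bpass ρ = τ

/-- `T(π)` and `T(τ)` are isomorphic as rooted trees: there is a bijection between
their node sets sending root to root and commuting with the parent map `bpass`. -/
def TreeIso (n : ℕ) (π τ : List ℕ) : Prop :=
  ∃ φ : List ℕ → List ℕ,
    (∀ σ, IsNode n π σ → IsNode n τ (φ σ)) ∧
    (∀ σ σ', IsNode n π σ → IsNode n π σ' → φ σ = φ σ' → σ = σ') ∧
    (∀ ρ, IsNode n τ ρ → ∃ σ, IsNode n π σ ∧ φ σ = ρ) ∧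
    φ π = τ ∧
    (∀ σ, IsNode n π σ → σ ≠ π → φ (bpass σ) = bpass (φ σ))

namespace S9

theorem bpass_perm : ∀ l : List ℕ, (bpass l).Perm l
  | [] => by simp [bpass]
  | [a] => by simp [bpass]
  | a :: b :: t => by
    rw [bpass]
    split
    · exact ((bpass_perm (a :: t)).cons b).trans (List.Perm.swap a b t)
    · exact (bpass_perm (b :: t)).cons a
  termination_by l => l.length

theorem bpass_length (l : List ℕ) : (bpass l).length = l.length :=
  (bpass_perm l).length_eq

theorem bpass_max : ∀ (a : ℕ) (t : List ℕ), ∃ u m, bpass (a :: t) = u ++ [m] ∧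
    (∀ x ∈ a :: t, x ≤ m) ∧ u.length = t.length
  | a, [] => ⟨[], a, by simp [bpass], by simp, rfl⟩
  | a, b :: t => by
    by_cases hba : b < a
    · obtain ⟨u, m, he, hm, hl⟩ := bpass_max a t
      refine ⟨b :: u, m, by simp [bpass, hba, he], ?_, by simp [hl]⟩
      intro x hx
      rw [List.mem_cons, List.mem_cons] at hx
      rcases hx with hx | hx | hx
      · simpa [hx] using hm a (by simp)
      · simpa [hx] using le_of_lt (lt_of_lt_of_le hba (hm a (by simp)))
      · exact hm x (by simp [hx])
    · obtain ⟨u, m, he, hm, hl⟩ := bpass_max b t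
      refine ⟨a :: u, m, by simp [bpass, hba, he], ?_, by simp [hl]⟩
      intro x hx
      rw [List.mem_cons] at hx
      rcases hx with hx | hx
      · simpa [hx] using le_trans (Nat.le_of_not_lt hba) (hm b (by simp))
      · exact hm x hx
  termination_by _ t => t.length

theorem bpass_append_max : ∀ (u : List ℕ) (M : ℕ), (∀ x ∈ u, x ≤ M) →
    bpass (u ++ [M]) = bpass u ++ [M]
  | [], M, _ => by simp [bpass]
  | [a], M, h => by
    have : ¬ M < a := Nat.not_lt.2 (h a (by simp))
    simp [bpass, this]
  | a :: b :: t, M, h => by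
    show bpass (a :: b :: (t ++ [M])) = bpass (a :: b :: t) ++ [M]
    rw [bpass, bpass]
    split
    · rw [show a :: (t ++ [M]) = (a :: t) ++ [M] by rfl,
        bpass_append_max (a :: t) M (fun x hx => h x (by
          rw [List.mem_cons] at hx
          rcases hx with hx | hx
          · simp [hx]
          · simp [hx]))]
      rfl
    · rw [show b :: (t ++ [M]) = (b :: t) ++ [M] by rfl,
        bpass_append_max (b :: t) M (fun x hx => h x (by
          rw [List.mem_cons] at hx
          rcases hx with hx | hx
          · simp [hx]
          · simp [hx]))]
      rfl
  termination_by u _ _ => u.length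

theorem bpass_iter_perm (k : ℕ) (l : List ℕ) : (bpass^[k] l).Perm l := by
  induction k with
  | zero => rfl
  | succ k ih => rw [Function.iterate_succ_apply']; exact (bpass_perm _).trans ih

theorem bpass_iter_append_max (k : ℕ) : ∀ (u : List ℕ) (M : ℕ), (∀ x ∈ u, x ≤ M) →
    bpass^[k] (u ++ [M]) = bpass^[k] u ++ [M] := by
  induction k with
  | zero => intro u M _; rfl
  | succ k ih =>
    intro u M h
    rw [Function.iterate_succ_apply, Function.iterate_succ_apply,
      bpass_append_max u M h, ih (bpass u) M (fun x hx => h x ((bpass_perm u).mem_iff.1 hx))]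

theorem bpass_iter_sorted : ∀ (k : ℕ) (l : List ℕ), l.length ≤ k →
    (bpass^[k] l).Pairwise (· ≤ ·) := by
  intro k
  induction k with
  | zero => intro l hl; rw [List.length_eq_zero_iff.1 (Nat.le_zero.1 hl)]; simp
  | succ k ih =>
    intro l hl
    match l with
    | [] => rw [Function.iterate_fixed (show bpass [] = [] by simp [bpass])]; simp
    | a :: t =>
      obtain ⟨u, m, he, hm, hlen⟩ := bpass_max a t
      rw [Function.iterate_succ_apply, he,
        bpass_iter_append_max k u m (fun x hx => hm x ((he ▸ bpass_perm (a :: t)).mem_iff.1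
          (by simp [hx])))]
      have hsu : (bpass^[k] u).Pairwise (· ≤ ·) := ih u (by simp at hl; omega)
      rw [List.pairwise_append]
      refine ⟨hsu, by simp, ?_⟩
      intro x hx y hy
      simp at hy; subst hy
      exact hm x ((he ▸ bpass_perm (a :: t)).mem_iff.1 (by
        simp [(bpass_iter_perm k u).mem_iff.1 hx]))

theorem bpass_sorted_fix : ∀ l : List ℕ, l.Pairwise (· ≤ ·) → bpass l = l
  | [], _ => by simp [bpass]
  | [a], _ => by simp [bpass]
  | a :: b :: t, hs => by
    have hab : a ≤ b := (List.pairwise_cons.1 hs).1 b (by simp)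
    rw [bpass, if_neg (Nat.not_lt.2 hab), bpass_sorted_fix (b :: t) (List.pairwise_cons.1 hs).2]
  termination_by l _ => l.length

theorem bpass_fix_sorted : ∀ l : List ℕ, bpass l = l → l.Pairwise (· ≤ ·)
  | [], _ => by simp
  | [a], _ => by simp
  | a :: b :: t, hfix => by
    rw [bpass] at hfix
    split at hfix
    · rename_i hba
      have : b = a := by injection hfix
      omega
    · rename_i hba
      have h2 : bpass (b :: t) = b :: t := by injection hfix
      have hs := bpass_fix_sorted (b :: t) h2
      rw [List.pairwise_cons]
      refine ⟨?_, hs⟩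
      intro c hc
      rw [List.mem_cons] at hc
      rcases hc with hc | hc
      · simpa [hc] using Nat.le_of_not_lt hba
      · exact le_trans (Nat.le_of_not_lt hba) ((List.pairwise_cons.1 hs).1 c hc)
  termination_by l _ => l.length

theorem bpass_no_cycle (k : ℕ) (l : List ℕ) (h : bpass^[k + 1] l = l) :
    bpass l = l := by
  have hfix : ∀ m, bpass^[(k + 1) * m] l = l := by
    intro m
    rw [Function.iterate_mul]
    exact Function.iterate_fixed h m
  apply bpass_sorted_fix
  have := bpass_iter_sorted ((k + 1) * l.length) l (by nlinarith)
  rwa [hfix l.length] at this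

def decomp : List ℕ → List (ℕ × List ℕ)
  | [] => []
  | a :: l => (a, l.takeWhile (· < a)) :: decomp (l.dropWhile (· < a))
  termination_by l => l.length
  decreasing_by
    simp only [List.length_cons]
    have := (List.dropWhile_sublist (l := l) (fun x => decide (x < a))).length_le
    omega

def fromD : List (ℕ × List ℕ) → List ℕ
  | [] => []
  | (c, B) :: D => c :: (B ++ fromD D)

def toSig : List (ℕ × List ℕ) → List ℕ
  | [] => []
  | (c, B) :: D => B ++ c :: toSig D

def Good : List ℕ → List (ℕ × List ℕ) → Prop
  | _, [] => True
  | u, (c, B) :: D => (∀ x ∈ u, x < c) ∧ (∀ x ∈ B, x < c) ∧ Good (u ++ c :: B) D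

def lens (D : List (ℕ × List ℕ)) : List ℕ := D.map fun p => p.2.length

def rechunk : List ℕ → List ℕ → List (ℕ × List ℕ)
  | [], _ => []
  | b :: L, s => (s.getD b 0, s.take b) :: rechunk L (s.drop (b + 1))

def sumL (L : List ℕ) : ℕ := (L.map (· + 1)).sum

def startsF : List ℕ → List ℕ
  | [] => []
  | b :: L => 0 :: (startsF L).map (· + (b + 1))

def startsS : List ℕ → List ℕ
  | [] => []
  | b :: L => b :: (startsS L).map (· + (b + 1))

def Phi (s' ρ : List ℕ) : List ℕ := fromD (rechunk (lens (decomp ρ)) s')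

theorem fromD_decomp : ∀ l : List ℕ, fromD (decomp l) = l
  | [] => by rw [decomp]; rfl
  | a :: l => by
    rw [decomp, fromD, fromD_decomp (l.dropWhile (· < a)), List.takeWhile_append_dropWhile]
  termination_by l => l.length
  decreasing_by
    simp only [List.length_cons]
    have := (List.dropWhile_sublist (l := l) (fun x => decide (x < a))).length_le
    omega

theorem good_mono : ∀ (D : List (ℕ × List ℕ)) (u u' : List ℕ),
    (∀ x ∈ u', x ∈ u) → Good u D → Good u' D
  | [], _, _, _, _ => trivial
  | (c, B) :: D, u, u', hsub, hg => by
    obtain ⟨h1, h2, h3⟩ := hg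
    refine ⟨fun x hx => h1 x (hsub x hx), h2, ?_⟩
    refine good_mono D (u ++ c :: B) (u' ++ c :: B) ?_ h3
    intro x hx
    rw [List.mem_append] at hx ⊢
    rcases hx with hx | hx
    · exact Or.inl (hsub x hx)
    · exact Or.inr hx

theorem good_decomp : ∀ (l u : List ℕ), l.Nodup → (∀ x ∈ u, ∀ b ∈ l.head?, x < b) →
    Good u (decomp l)
  | [], _, _, _ => by rw [decomp]; trivial
  | a :: l, u, hnd, hu => by
    rw [decomp]
    refine ⟨fun x hx => hu x hx a rfl, fun x hx => by have := List.mem_takeWhile_imp hx; simp_all, ?_⟩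
    apply good_decomp
    · exact (List.nodup_cons.1 hnd).2.sublist (List.dropWhile_sublist _)
    · intro x hx b hb
      have hbmem : b ∈ l.dropWhile (· < a) := List.mem_of_mem_head? hb
      have hbl : b ∈ l := (List.dropWhile_sublist _).mem hbmem
      have hba : ¬ (b < a) := by
        have hne : l.dropWhile (· < a) ≠ [] := by
          intro hcon; rw [hcon] at hb; simp at hb
        have hhd := List.head_dropWhile_not (fun x => decide (x < a)) hne
        rw [List.head?_eq_head hne] at hb
        simp only [Option.mem_def, Option.some.injEq] at hb
        rw [hb] at hhd
        simpa using hhd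
      have hab : a < b := by
        rcases Nat.lt_or_ge b a with hc | hc
        · exact absurd hc hba
        · rcases Nat.eq_or_lt_of_le hc with hc | hc
          · exact absurd hc.symm (by intro he; exact (List.nodup_cons.1 hnd).1 (he ▸ hbl))
          · exact hc
      rw [List.mem_append] at hx
      rcases hx with hx | hx
      · exact lt_trans (hu x hx a rfl) hab
      · rw [List.mem_cons] at hx
        rcases hx with hx | hx
        · omega
        · have := List.mem_takeWhile_imp hx
          simp at this
          omega
  termination_by l _ _ _ => l.length
  decreasing_by
    simp only [List.length_cons]
    have := (List.dropWhile_sublist (l := l) (fun x => decide (x < a))).length_le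
    omega

theorem bpass_cons_max : ∀ (B : List ℕ) (c : ℕ), (∀ x ∈ B, x < c) →
    bpass (c :: B) = B ++ [c]
  | [], c, _ => by simp [bpass]
  | b :: B, c, h => by
    rw [bpass, if_pos (h b (by simp)), bpass_cons_max B c (fun x hx => h x (by simp [hx]))]
    rfl

theorem bpass_cons_block : ∀ (B : List ℕ) (c c' : ℕ) (t : List ℕ), (∀ x ∈ B, x < c) →
    c < c' → bpass (c :: (B ++ c' :: t)) = B ++ c :: bpass (c' :: t)
  | [], c, c', t, _, hcc => by
    show bpass (c :: c' :: t) = c :: bpass (c' :: t)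
    rw [bpass, if_neg (by omega)]
  | b :: B, c, c', t, h, hcc => by
    show bpass (c :: b :: (B ++ c' :: t)) = b :: (B ++ c :: bpass (c' :: t))
    rw [bpass, if_pos (h b (by simp)),
      bpass_cons_block B c c' t (fun x hx => h x (by simp [hx])) hcc]

theorem bpass_fromD : ∀ (D : List (ℕ × List ℕ)) (u : List ℕ), Good u D →
    bpass (fromD D) = toSig D
  | [], _, _ => by simp [fromD, toSig, bpass]
  | [(c, B)], u, hg => by
    show bpass (c :: (B ++ [])) = B ++ c :: []
    rw [List.append_nil, bpass_cons_max B c hg.2.1]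
  | (c, B) :: (c', B') :: D, u, hg => by
    show bpass (c :: (B ++ (c' :: (B' ++ fromD D)))) = B ++ c :: toSig ((c', B') :: D)
    have hcc : c < c' := hg.2.2.1 c (by simp)
    rw [bpass_cons_block B c c' (B' ++ fromD D) hg.2.1 hcc]
    have h2 := bpass_fromD ((c', B') :: D) (u ++ c :: B) hg.2.2
    rw [show bpass (c' :: (B' ++ fromD D)) = bpass (fromD ((c', B') :: D)) from rfl, h2]

theorem perm_fromD_toSig : ∀ D : List (ℕ × List ℕ), (fromD D).Perm (toSig D)
  | [] => List.Perm.refl _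
  | (c, B) :: D => by
    show (c :: (B ++ fromD D)).Perm (B ++ c :: toSig D)
    exact (((perm_fromD_toSig D).append_left B).cons c).trans List.perm_middle.symm

theorem decomp_fromD : ∀ (D : List (ℕ × List ℕ)) (u : List ℕ), Good u D →
    decomp (fromD D) = D
  | [], _, _ => by rw [fromD, decomp]
  | (c, B) :: D, u, hg => by
    show decomp (c :: (B ++ fromD D)) = (c, B) :: D
    rw [decomp]
    have hB : ∀ x ∈ B, (fun x => decide (x < c)) x = true := by
      intro x hx; simpa using hg.2.1 x hx
    rw [List.takeWhile_append_of_pos hB, List.dropWhile_append_of_pos hB]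
    match D, hg.2.2 with
    | [], _ => simp [decomp, fromD]
    | (c', B') :: D', hg' =>
      have hcc : c < c' := hg'.1 c (by simp)
      have hdec : decide (c' < c) = false := by simp; omega
      rw [show fromD ((c', B') :: D') = c' :: (B' ++ fromD D') from rfl]
      rw [List.takeWhile_cons, List.dropWhile_cons, hdec]
      simp only [Bool.false_eq_true, if_false]
      rw [show c' :: (B' ++ fromD D') = fromD ((c', B') :: D') from rfl]
      rw [decomp_fromD ((c', B') :: D') (u ++ c :: B) hg.2.2]
      simp

theorem length_toSig : ∀ D : List (ℕ × List ℕ), (toSig D).length = sumL (lens D)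
  | [] => rfl
  | (c, B) :: D => by
    show (B ++ c :: toSig D).length = sumL (B.length :: lens D)
    simp [sumL, length_toSig D, lens]
    omega

theorem length_fromD : ∀ D : List (ℕ × List ℕ), (fromD D).length = sumL (lens D)
  | [] => rfl
  | (c, B) :: D => by
    show (c :: (B ++ fromD D)).length = sumL (B.length :: lens D)
    simp [sumL, length_fromD D, lens]
    omega

theorem toSig_rechunk : ∀ (L s : List ℕ), sumL L = s.length → toSig (rechunk L s) = s
  | [], s, h => by
    have : s = [] := by
      cases s with
      | nil => rfl
      | cons a t => simp [sumL] at h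
    rw [this]; rfl
  | b :: L, s, h => by
    have hbs : b + 1 ≤ s.length := by simp [sumL] at h; omega
    show s.take b ++ (s.getD b 0) :: toSig (rechunk L (s.drop (b + 1))) = s
    rw [toSig_rechunk L (s.drop (b + 1)) (by simp [sumL] at h ⊢; omega)]
    have hb : b < s.length := by omega
    rw [List.getD_eq_getElem s 0 hb]
    conv_rhs => rw [← List.take_append_drop (b + 1) s]
    rw [List.take_succ, List.getElem?_eq_getElem hb]
    simp

theorem lens_rechunk : ∀ (L s : List ℕ), sumL L = s.length → lens (rechunk L s) = L
  | [], s, _ => rfl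
  | b :: L, s, h => by
    show (s.take b).length :: lens (rechunk L (s.drop (b + 1))) = b :: L
    rw [lens_rechunk L (s.drop (b + 1)) (by simp [sumL] at h ⊢; omega)]
    simp [sumL] at h
    simp
    omega
theorem mem_iff_getD {x : ℕ} {u : List ℕ} : x ∈ u ↔ ∃ i, i < u.length ∧ u.getD i 0 = x := by
  rw [List.mem_iff_getElem]
  constructor
  · rintro ⟨i, hi, rfl⟩
    exact ⟨i, hi, List.getD_eq_getElem u 0 hi⟩
  · rintro ⟨i, hi, hx⟩
    exact ⟨i, hi, by rw [← List.getD_eq_getElem u 0 hi, hx]⟩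

theorem ltr_append (u v : List ℕ) (j : ℕ) :
    IsLTRMax (u ++ v) (u.length + j) ↔ IsLTRMax v j ∧ ∀ x ∈ u, x < v.getD j 0 := by
  have hval : (u ++ v).getD (u.length + j) 0 = v.getD j 0 := by
    rw [List.getD_append_right u v 0 _ (Nat.le_add_right _ _), Nat.add_sub_cancel_left]
  constructor
  · rintro ⟨hlen, hmax⟩
    rw [List.length_append] at hlen
    refine ⟨⟨by omega, ?_⟩, ?_⟩
    · intro i hi
      have := hmax (u.length + i) (by omega)
      rwa [hval, List.getD_append_right u v 0 _ (Nat.le_add_right _ _),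
        Nat.add_sub_cancel_left] at this
    · intro x hx
      obtain ⟨i, hi, rfl⟩ := mem_iff_getD.1 hx
      have := hmax i (by omega)
      rwa [hval, List.getD_append u v 0 i hi] at this
  · rintro ⟨⟨hlen, hmax⟩, hu⟩
    refine ⟨by rw [List.length_append]; omega, ?_⟩
    intro i hi
    rw [hval]
    rcases Nat.lt_or_ge i u.length with hc | hc
    · rw [List.getD_append u v 0 i hc]
      exact hu _ (mem_iff_getD.2 ⟨i, hc, rfl⟩)
    · rw [List.getD_append_right u v 0 _ hc]
      exact hmax (i - u.length) (by omega)

theorem ltr_append_left (u v : List ℕ) (j : ℕ) (hj : j < u.length) :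
    IsLTRMax (u ++ v) j ↔ IsLTRMax u j := by
  constructor
  · rintro ⟨_, hmax⟩
    refine ⟨hj, ?_⟩
    intro i hi
    have := hmax i hi
    rwa [List.getD_append u v 0 i (by omega), List.getD_append u v 0 j hj] at this
  · rintro ⟨_, hmax⟩
    refine ⟨by rw [List.length_append]; omega, ?_⟩
    intro i hi
    rw [List.getD_append u v 0 i (by omega), List.getD_append u v 0 j hj]
    exact hmax i hi

theorem ltr_zero (l : List ℕ) (hl : l ≠ []) : IsLTRMax l 0 :=
  ⟨List.length_pos_iff.2 hl, fun i hi => by omega⟩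
theorem ltr_fromD : ∀ (D : List (ℕ × List ℕ)) (u : List ℕ), Good u D → ∀ j,
    (IsLTRMax (u ++ fromD D) (u.length + j) ↔ j ∈ startsF (lens D))
  | [], u, _, j => by
    constructor
    · rintro ⟨hlen, -⟩
      have hfe : fromD ([] : List (ℕ × List ℕ)) = [] := rfl
      rw [hfe, List.append_nil] at hlen
      omega
    · simp [startsF, lens]
  | (c, B) :: D, u, hg, j => by
    obtain ⟨h1, h2, h3⟩ := hg
    have hstarts : startsF (lens ((c, B) :: D)) =
        0 :: (startsF (lens D)).map (· + (B.length + 1)) := by simp [lens, startsF]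
    rw [hstarts]
    have hfrom : fromD ((c, B) :: D) = c :: (B ++ fromD D) := rfl
    rcases Nat.lt_or_ge j (B.length + 1) with hj | hj
    · rcases Nat.eq_zero_or_pos j with rfl | hj0
      · simp only [List.mem_cons]
        constructor
        · intro _; simp
        · intro _
          rw [hfrom, ltr_append u (c :: (B ++ fromD D)) 0]
          exact ⟨ltr_zero _ (by simp), fun x hx => by simpa using h1 x hx⟩
      · constructor
        · intro hL
          exfalso
          rw [hfrom, ltr_append] at hL
          obtain ⟨⟨hlen, hmax⟩, -⟩ := hL
          have hv : (c :: (B ++ fromD D)).getD j 0 = B.getD (j - 1) 0 := by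
            obtain ⟨j0, rfl⟩ : ∃ j0, j = j0 + 1 := ⟨j - 1, by omega⟩
            simp only [List.getD_cons_succ]
            rw [List.getD_append _ _ 0 _ (by omega)]
            simp
          have h0 := hmax 0 hj0
          rw [hv] at h0
          simp only [List.getD_cons_zero] at h0
          have hmem : B.getD (j - 1) 0 ∈ B := mem_iff_getD.2 ⟨j - 1, by omega, rfl⟩
          have := h2 _ hmem
          omega
        · intro hR
          exfalso
          simp only [List.mem_cons, List.mem_map] at hR
          rcases hR with he | ⟨s, _, he⟩ <;> omega
    · obtain ⟨j', rfl⟩ : ∃ j', j = B.length + 1 + j' := ⟨j - (B.length + 1), by omega⟩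
      have hass : u ++ fromD ((c, B) :: D) = (u ++ c :: B) ++ fromD D := by
        rw [hfrom]; simp
      have hpos : u.length + (B.length + 1 + j') = (u ++ c :: B).length + j' := by
        simp; omega
      rw [hass, hpos, ltr_fromD D (u ++ c :: B) h3 j']
      simp only [List.mem_cons, List.mem_map]
      constructor
      · intro hj'; exact Or.inr ⟨j', hj', by omega⟩
      · rintro (he | ⟨s, hs, he⟩)
        · omega
        · have : s = j' := by omega
          rwa [← this]

theorem ltr_toSig : ∀ (D : List (ℕ × List ℕ)) (u : List ℕ), Good u D →
    ∀ q ∈ startsS (lens D), IsLTRMax (u ++ toSig D) (u.length + q)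
  | [], u, _, q, hq => by simp [startsS, lens] at hq
  | (c, B) :: D, u, hg, q, hq => by
    obtain ⟨h1, h2, h3⟩ := hg
    have hq' : q = B.length ∨ ∃ s ∈ startsS (lens D), q = s + (B.length + 1) := by
      simp only [lens, List.map_cons, startsS, List.mem_cons, List.mem_map] at hq
      rcases hq with hq | ⟨s, hs, hq⟩
      · exact Or.inl hq
      · exact Or.inr ⟨s, hs, hq.symm⟩
    have htos : toSig ((c, B) :: D) = B ++ c :: toSig D := rfl
    rcases hq' with rfl | ⟨s, hs, rfl⟩
    · have hass : u ++ toSig ((c, B) :: D) = (u ++ B) ++ (c :: toSig D) := by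
        rw [htos]; simp
      have hpos : u.length + B.length = (u ++ B).length + 0 := by simp
      rw [hass, hpos, ltr_append]
      refine ⟨ltr_zero _ (by simp), ?_⟩
      intro x hx
      simp only [List.getD_cons_zero]
      rw [List.mem_append] at hx
      rcases hx with hx | hx
      · exact h1 x hx
      · exact h2 x hx
    · have hass : u ++ toSig ((c, B) :: D) = (u ++ (B ++ [c])) ++ toSig D := by
        rw [htos]; simp
      have hpos : u.length + (s + (B.length + 1)) = (u ++ (B ++ [c])).length + s := by
        simp; omega
      rw [hass, hpos]
      refine ltr_toSig D _ (good_mono D _ _ ?_ h3) s hs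
      intro x hx
      simp only [List.mem_append, List.mem_cons] at hx ⊢
      tauto

theorem good_of_ltr : ∀ (D : List (ℕ × List ℕ)) (u : List ℕ),
    (∀ q ∈ startsS (lens D), IsLTRMax (u ++ toSig D) (u.length + q)) → Good u D
  | [], u, _ => trivial
  | (c, B) :: D, u, hall => by
    have htos : toSig ((c, B) :: D) = B ++ c :: toSig D := rfl
    have h0 := hall B.length (by simp [startsS, lens])
    have hass : u ++ toSig ((c, B) :: D) = (u ++ B) ++ (c :: toSig D) := by
      rw [htos]; simp
    have hpos : u.length + B.length = (u ++ B).length + 0 := by simp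
    rw [hass, hpos, ltr_append] at h0
    obtain ⟨-, hlt⟩ := h0
    simp only [List.getD_cons_zero] at hlt
    refine ⟨fun x hx => hlt x (by simp [hx]), fun x hx => hlt x (by simp [hx]), ?_⟩
    apply good_mono D (u ++ (B ++ [c])) (u ++ c :: B)
      (by intro x hx; simp only [List.mem_append, List.mem_cons] at hx ⊢; tauto)
    apply good_of_ltr D (u ++ (B ++ [c]))
    intro q hq
    have hmem : q + (B.length + 1) ∈ startsS (lens ((c, B) :: D)) := by
      simp only [lens, List.map_cons, startsS, List.mem_cons, List.mem_map]
      exact Or.inr ⟨q, hq, rfl⟩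
    have := hall (q + (B.length + 1)) hmem
    have hass2 : u ++ toSig ((c, B) :: D) = (u ++ (B ++ [c])) ++ toSig D := by
      rw [htos]; simp
    have hpos2 : u.length + (q + (B.length + 1)) = (u ++ (B ++ [c])).length + q := by
      simp; omega
    rwa [hass2, hpos2] at this
theorem rechunk_toSig : ∀ D : List (ℕ × List ℕ), rechunk (lens D) (toSig D) = D
  | [] => rfl
  | (c, B) :: D => by
    show ((B ++ c :: toSig D).getD B.length 0, (B ++ c :: toSig D).take B.length) ::
      rechunk (lens D) ((B ++ c :: toSig D).drop (B.length + 1)) = (c, B) :: D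
    have h1 : (B ++ c :: toSig D).getD B.length 0 = c := by
      rw [List.getD_append_right _ _ _ _ (le_refl _)]
      simp
    have h2 : (B ++ c :: toSig D).take B.length = B := List.take_left
    have h3 : (B ++ c :: toSig D).drop (B.length + 1) = toSig D := by
      rw [show B ++ c :: toSig D = (B ++ [c]) ++ toSig D by simp]
      exact List.drop_left' (by simp)
    rw [h1, h2, h3, rechunk_toSig D]

theorem main_lemma (ρ σ σ' : List ℕ) (hnd : ρ.Nodup) (hne : ρ ≠ [])
    (hb : bpass ρ = σ) (hlen : σ'.length = σ.length)
    (hR : ∀ k, IsLTRMax σ k ↔ IsLTRMax σ' k) :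
    bpass (Phi σ' ρ) = σ' ∧ (Phi σ' ρ).Perm σ' ∧
    (∀ k, IsLTRMax ρ k ↔ IsLTRMax (Phi σ' ρ) k) ∧ Phi σ (Phi σ' ρ) = ρ := by
  have hgood : Good [] (decomp ρ) := good_decomp ρ [] hnd (by simp)
  have hfrom : fromD (decomp ρ) = ρ := fromD_decomp ρ
  have htos : toSig (decomp ρ) = σ := by
    rw [← hb, ← bpass_fromD (decomp ρ) [] hgood, hfrom]
  have hsum : sumL (lens (decomp ρ)) = σ'.length := by
    rw [hlen, ← htos, length_toSig]
  have htos' : toSig (rechunk (lens (decomp ρ)) σ') = σ' := toSig_rechunk _ _ hsum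
  have hlens' : lens (rechunk (lens (decomp ρ)) σ') = lens (decomp ρ) := lens_rechunk _ _ hsum
  have hgood' : Good [] (rechunk (lens (decomp ρ)) σ') := by
    apply good_of_ltr
    intro q hq
    rw [hlens'] at hq
    have h1 : IsLTRMax σ q := by
      have := ltr_toSig (decomp ρ) [] hgood q hq
      rw [htos] at this
      simpa using this
    have h2 := (hR q).1 h1
    rw [show ([] : List ℕ) ++ toSig (rechunk (lens (decomp ρ)) σ') =
      toSig (rechunk (lens (decomp ρ)) σ') from rfl, htos']
    simpa using h2
  have hPhi : Phi σ' ρ = fromD (rechunk (lens (decomp ρ)) σ') := rfl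
  have hb' : bpass (Phi σ' ρ) = σ' := by
    rw [hPhi, bpass_fromD _ [] hgood', htos']
  refine ⟨hb', ?_, ?_, ?_⟩
  · have hp := perm_fromD_toSig (rechunk (lens (decomp ρ)) σ')
    rw [htos'] at hp
    rw [hPhi]
    exact hp
  · intro k
    have t1 := ltr_fromD (decomp ρ) [] hgood k
    have t2 := ltr_fromD (rechunk (lens (decomp ρ)) σ') [] hgood' k
    rw [hlens'] at t2
    simp only [List.length_nil, List.nil_append, Nat.zero_add] at t1 t2
    rw [hfrom] at t1
    rw [← hPhi] at t2
    rw [t1, t2]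
  · have hdec' : decomp (Phi σ' ρ) = rechunk (lens (decomp ρ)) σ' := by
      rw [hPhi]
      exact decomp_fromD _ [] hgood'
    show fromD (rechunk (lens (decomp (Phi σ' ρ))) σ) = ρ
    rw [hdec', hlens', ← htos, rechunk_toSig, hfrom]
def phiAux (π τ : List ℕ) : ℕ → List ℕ → List ℕ
  | 0, _ => τ
  | j + 1, σ => if σ = π then τ else Phi (phiAux π τ j (bpass σ)) σ

theorem phiAux_root (π τ : List ℕ) : ∀ f, phiAux π τ f π = τ
  | 0 => rfl
  | f + 1 => by rw [phiAux, if_pos rfl]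

theorem idList_sorted_lt (n : ℕ) : (idList n).Pairwise (· < ·) := by
  refine List.Pairwise.map _ ?_ (List.pairwise_lt_range (n := n))
  intro a b hab
  omega

theorem idList_sorted_le (n : ℕ) : (idList n).Pairwise (· ≤ ·) :=
  (idList_sorted_lt n).imp le_of_lt

theorem idList_length (n : ℕ) : (idList n).length = n := by simp [idList]

theorem idList_getD (n i : ℕ) (hi : i < n) : (idList n).getD i 0 = i + 1 := by
  rw [List.getD_eq_getElem _ _ (by simp [idList_length]; omega)]
  simp [idList]

theorem idList_allLTR (n : ℕ) : ∀ j < n, IsLTRMax (idList n) j := by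
  intro j hj
  refine ⟨by simp [idList_length]; omega, ?_⟩
  intro i hi
  rw [idList_getD n i (by omega), idList_getD n j hj]
  omega

theorem permList_length {n : ℕ} {l : List ℕ} (h : IsPermList n l) : l.length = n := by
  rw [h.length_eq, idList_length]

theorem permList_nodup {n : ℕ} {l : List ℕ} (h : IsPermList n l) : l.Nodup := by
  refine h.symm.nodup ?_
  refine List.Nodup.map (fun a b hab => by omega) (List.nodup_range (n := n))

theorem permList_sorted_eq {n : ℕ} {l : List ℕ} (h : IsPermList n l)
    (hs : l.Pairwise (· ≤ ·)) : l = idList n :=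
  List.Perm.eq_of_pairwise' hs (idList_sorted_le n) h

theorem sorted_of_allLTR {l : List ℕ} (h : ∀ j < l.length, IsLTRMax l j) :
    l.Pairwise (· ≤ ·) := by
  rw [List.pairwise_iff_getElem]
  intro i j hi hj hij
  have := (h j hj).2 i hij
  rw [List.getD_eq_getElem _ _ hi, List.getD_eq_getElem _ _ hj] at this
  omega

theorem allLTR_of_perm_eq_idList {n : ℕ} {l : List ℕ} (h : IsPermList n l)
    (hall : ∀ j < n, IsLTRMax l j) : l = idList n := by
  apply permList_sorted_eq h
  apply sorted_of_allLTR
  intro j hj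
  exact hall j (by rwa [permList_length h] at hj)

theorem bpass_iter_idList {n : ℕ} {l : List ℕ} (h : IsPermList n l) :
    bpass^[n] l = idList n := by
  have hs : (bpass^[n] l).Pairwise (· ≤ ·) :=
    bpass_iter_sorted n l (le_of_eq (permList_length h))
  exact permList_sorted_eq ((bpass_iter_perm n l).trans h) hs

theorem nodeAt_le {n : ℕ} {π σ : List ℕ} {j : ℕ} (hσ : IsNodeAt n π σ j) : j ≤ n := by
  by_contra hc
  push_neg at hc
  have hid : bpass^[n] σ = idList n := bpass_iter_idList hσ.1
  have : bpass^[j] σ = idList n := by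
    rw [show j = (j - n) + n by omega, Function.iterate_add_apply, hid,
      Function.iterate_fixed (bpass_sorted_fix _ (idList_sorted_le n))]
  have hπ : π = idList n := by rw [← hσ.2.1, this]
  exact hσ.2.2 n hc (by rw [hid, hπ])

theorem node_to_nodeAt {n : ℕ} {π σ : List ℕ} (hσ : IsNode n π σ) :
    ∃ j, IsNodeAt n π σ j := by
  obtain ⟨hp, hex⟩ := hσ
  exact ⟨Nat.find hex, hp, Nat.find_spec hex, fun i hi => Nat.find_min hex hi⟩

theorem nodeAt_bpass {n : ℕ} {π σ : List ℕ} {j : ℕ} (hσ : IsNodeAt n π σ (j + 1)) :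
    IsNodeAt n π (bpass σ) j := by
  obtain ⟨hp, heq, hmin⟩ := hσ
  refine ⟨(bpass_perm σ).trans hp, ?_, ?_⟩
  · rw [← Function.iterate_succ_apply]; exact heq
  · intro i hi
    rw [← Function.iterate_succ_apply]
    exact hmin (i + 1) (by omega)

theorem nodeAt_ne {n : ℕ} {π σ : List ℕ} {j : ℕ} (hσ : IsNodeAt n π σ (j + 1)) : σ ≠ π :=
  hσ.2.2 0 (by omega)

theorem fuelIrrel (π τ : List ℕ) {n : ℕ} : ∀ (j : ℕ) (σ : List ℕ), IsNodeAt n π σ j →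
    ∀ f f', j ≤ f → j ≤ f' → phiAux π τ f σ = phiAux π τ f' σ := by
  intro j
  induction j with
  | zero =>
    intro σ hσ f f' _ _
    have : σ = π := hσ.2.1
    rw [this, phiAux_root, phiAux_root]
  | succ j ih =>
    intro σ hσ f f' hf hf'
    obtain ⟨a, rfl⟩ : ∃ a, f = a + 1 := ⟨f - 1, by omega⟩
    obtain ⟨b, rfl⟩ : ∃ b, f' = b + 1 := ⟨f' - 1, by omega⟩
    have hne := nodeAt_ne hσ
    rw [phiAux, phiAux, if_neg hne, if_neg hne,
      ih (bpass σ) (nodeAt_bpass hσ) a b (by omega) (by omega)]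
theorem key {n : ℕ} (π τ : List ℕ) (hπ : IsPermList n π) (hτ : IsPermList n τ)
    (h : ∀ j, IsLTRMax π j ↔ IsLTRMax τ j) :
    ∀ (j : ℕ) (σ : List ℕ), IsNodeAt n π σ j →
      IsNodeAt n τ (phiAux π τ n σ) j ∧
      (∀ k, IsLTRMax σ k ↔ IsLTRMax (phiAux π τ n σ) k) ∧
      phiAux τ π n (phiAux π τ n σ) = σ ∧
      (σ ≠ π → bpass (phiAux π τ n σ) = phiAux π τ n (bpass σ)) := by
  intro j
  induction j with
  | zero =>
    intro σ hσ
    have hσπ : σ = π := hσ.2.1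
    rw [hσπ, phiAux_root]
    exact ⟨⟨hτ, rfl, fun i hi => absurd hi (by omega)⟩, h, phiAux_root τ π n,
      fun hne => absurd rfl hne⟩
  | succ j ih =>
    intro σ hσ
    have hne := nodeAt_ne hσ
    have hσc := nodeAt_bpass hσ
    obtain ⟨c1, c2, c3, c4⟩ := ih (bpass σ) hσc
    have hjn : j + 1 ≤ n := nodeAt_le hσ
    obtain ⟨m, rfl⟩ : ∃ m, n = m + 1 := by
      cases n with
      | zero => omega
      | succ m => exact ⟨m, rfl⟩
    have hfuel : phiAux π τ m (bpass σ) = phiAux π τ (m + 1) (bpass σ) :=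
      fuelIrrel π τ j (bpass σ) hσc m (m + 1) (by omega) (by omega)
    have hunfold : phiAux π τ (m + 1) σ = Phi (phiAux π τ (m + 1) (bpass σ)) σ := by
      rw [phiAux, if_neg hne, hfuel]
    have hndσ : σ.Nodup := permList_nodup hσ.1
    have hneσ : σ ≠ [] := by
      intro hcon
      have hl := permList_length hσ.1
      rw [hcon] at hl
      simp at hl
    have hlen : (phiAux π τ (m + 1) (bpass σ)).length = (bpass σ).length := by
      rw [permList_length c1.1, permList_length hσc.1]
    obtain ⟨m1, m2, m3, m4⟩ :=
      main_lemma σ (bpass σ) (phiAux π τ (m + 1) (bpass σ)) hndσ hneσ rfl hlen c2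
    rw [← hunfold] at m1 m2 m3 m4
    have hphine : phiAux π τ (m + 1) σ ≠ τ := by
      intro hcon
      have hb1 : bpass τ = phiAux π τ (m + 1) (bpass σ) := by
        conv_lhs => rw [← hcon]
        exact m1
      have hcyc : bpass^[j + 1] τ = τ := by
        rw [Function.iterate_succ_apply, hb1]
        exact c1.2.1
      have hsort : τ.Pairwise (· ≤ ·) := bpass_fix_sorted τ (bpass_no_cycle j τ hcyc)
      have hτid : τ = idList (m + 1) := permList_sorted_eq hτ hsort
      have hπid : π = idList (m + 1) := by
        apply allLTR_of_perm_eq_idList hπ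
        intro k hk
        exact (h k).2 (hτid ▸ idList_allLTR (m + 1) k hk)
      have hσid : σ = idList (m + 1) := by
        apply allLTR_of_perm_eq_idList hσ.1
        intro k hk
        apply (m3 k).2
        rw [hcon, hτid]
        exact idList_allLTR (m + 1) k hk
      exact hne (by rw [hσid, hπid])
    refine ⟨⟨m2.trans c1.1, ?_, ?_⟩, m3, ?_, fun _ => m1⟩
    · rw [Function.iterate_succ_apply, m1]
      exact c1.2.1
    · intro i hi
      cases i with
      | zero => exact fun hcon => hphine hcon
      | succ i =>
        rw [Function.iterate_succ_apply, m1]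
        exact c1.2.2 i (by omega)
    · rw [show phiAux τ π (m + 1) (phiAux π τ (m + 1) σ) =
          if (phiAux π τ (m + 1) σ) = τ then π
          else Phi (phiAux τ π m (bpass (phiAux π τ (m + 1) σ))) (phiAux π τ (m + 1) σ)
        from rfl]
      rw [if_neg hphine, m1]
      have hfuel2 : phiAux τ π m (phiAux π τ (m + 1) (bpass σ)) =
          phiAux τ π (m + 1) (phiAux π τ (m + 1) (bpass σ)) :=
        fuelIrrel τ π j _ c1 m (m + 1) (by omega) (by omega)
      rw [hfuel2, c3]
      exact m4

end S9


/-- Two permutations of the same size with left-to-right maxima in the same positions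
have isomorphic trees of iterated bubblesort preimages. -/
theorem stmt_9 (n : ℕ) (π τ : List ℕ) (hπ : IsPermList n π) (hτ : IsPermList n τ)
    (h : ∀ j, IsLTRMax π j ↔ IsLTRMax τ j) : TreeIso n π τ := by
  classical
  have keyπ := S9.key π τ hπ hτ h
  have keyτ := S9.key τ π hτ hπ (fun j => (h j).symm)
  refine ⟨S9.phiAux π τ n, ?_, ?_, ?_, S9.phiAux_root π τ n, ?_⟩
  · intro σ hσ
    obtain ⟨j, hj⟩ := S9.node_to_nodeAt hσ
    obtain ⟨c1, -, -, -⟩ := keyπ j σ hj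
    exact ⟨c1.1, j, c1.2.1⟩
  · intro σ σ' hσ hσ' heq
    obtain ⟨j, hj⟩ := S9.node_to_nodeAt hσ
    obtain ⟨j', hj'⟩ := S9.node_to_nodeAt hσ'
    have e1 := (keyπ j σ hj).2.2.1
    have e2 := (keyπ j' σ' hj').2.2.1
    rw [← e1, ← e2, heq]
  · intro ρ hρ
    obtain ⟨j, hj⟩ := S9.node_to_nodeAt hρ
    obtain ⟨c1, -, c3, -⟩ := keyτ j ρ hj
    exact ⟨S9.phiAux τ π n ρ, ⟨c1.1, j, c1.2.1⟩, c3⟩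
  · intro σ hσ hneσ
    obtain ⟨j, hj⟩ := S9.node_to_nodeAt hσ
    cases j with
    | zero => exact absurd hj.2.1 hneσ
    | succ j => exact ((keyπ (j + 1) σ hj).2.2.2 hneσ).symm
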